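/- arXiv:1805.09711 — 4 statements merged into one kernel-verified Lean document; each statement's English description precedes it below -/
import Mathlib

section
/- Let β > 0, λ ≠ 0, p = -√β(1+6λ-3λ²)/(1+3λ²), q = -√β(1-6λ-3λ²)/(1+3λ²), and φ₀ ∈ ℝ. Then the function u(x,t) = (1/2)(p-q)² sech²((1/2)(p-q)(x+(p+q)t) + φ₀) satisfies the scalar Boussinesq equation u_tt - 4β u_xx + (1/3) u_xxxx + (u²)_xx = 0. -/
private lemma coshne (y : ℝ) : Real.cosh y ≠ 0 := (Real.cosh_pos y).ne'

private lemma hd1 (y : ℝ) : HasDerivAt (fun z => (Real.cosh z)⁻¹ ^ 2)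
    (-2 * Real.sinh y * (Real.cosh y)⁻¹ ^ 3) y := by
  have h := ((Real.hasDerivAt_cosh y).inv (coshne y)).pow 2
  refine HasDerivAt.congr_deriv h (Eq.symm ?_)
  have hc := coshne y
  simp only [Pi.pow_apply, Pi.inv_apply, Nat.cast_ofNat, Nat.reduceSub, one_div]
  field_simp

private lemma hd2 (y : ℝ) : HasDerivAt (fun z => -2 * Real.sinh z * (Real.cosh z)⁻¹ ^ 3)
    (4 * (Real.cosh y)⁻¹ ^ 2 - 6 * (Real.cosh y)⁻¹ ^ 4) y := by
  have h := ((Real.hasDerivAt_sinh y).const_mul (-2 : ℝ)).mul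
    (((Real.hasDerivAt_cosh y).inv (coshne y)).pow 3)
  refine HasDerivAt.congr_deriv h (Eq.symm ?_)
  have hs := Real.sinh_sq y
  simp only [Pi.pow_apply, Pi.inv_apply, Nat.cast_ofNat, Nat.reduceSub, one_div]
  field_simp
  linear_combination (-6) * hs

private lemma hd3 (y : ℝ) : HasDerivAt
    (fun z => 4 * (Real.cosh z)⁻¹ ^ 2 - 6 * (Real.cosh z)⁻¹ ^ 4)
    (-8 * Real.sinh y * (Real.cosh y)⁻¹ ^ 3 + 24 * Real.sinh y * (Real.cosh y)⁻¹ ^ 5) y := by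
  have h := ((((Real.hasDerivAt_cosh y).inv (coshne y)).pow 2).const_mul (4 : ℝ)).sub
    ((((Real.hasDerivAt_cosh y).inv (coshne y)).pow 4).const_mul (6 : ℝ))
  refine HasDerivAt.congr_deriv h (Eq.symm ?_)
  have hc := coshne y
  simp only [Pi.pow_apply, Pi.inv_apply, Nat.cast_ofNat, Nat.reduceSub, one_div]
  field_simp
  ring

private lemma hd4 (y : ℝ) : HasDerivAt
    (fun z => -8 * Real.sinh z * (Real.cosh z)⁻¹ ^ 3 + 24 * Real.sinh z * (Real.cosh z)⁻¹ ^ 5)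
    (16 * (Real.cosh y)⁻¹ ^ 2 - 120 * (Real.cosh y)⁻¹ ^ 4 + 120 * (Real.cosh y)⁻¹ ^ 6) y := by
  have h := (((Real.hasDerivAt_sinh y).const_mul (-8 : ℝ)).mul
      (((Real.hasDerivAt_cosh y).inv (coshne y)).pow 3)).add
    (((Real.hasDerivAt_sinh y).const_mul (24 : ℝ)).mul
      (((Real.hasDerivAt_cosh y).inv (coshne y)).pow 5))
  refine HasDerivAt.congr_deriv h (Eq.symm ?_)
  have hs := Real.sinh_sq y
  simp only [Pi.pow_apply, Pi.inv_apply, Nat.cast_ofNat, Nat.reduceSub, one_div]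
  field_simp
  linear_combination (120 - 24 * Real.cosh y ^ 2) * hs

private lemma hg1 (y : ℝ) : HasDerivAt (fun z => (Real.cosh z)⁻¹ ^ 4)
    (-4 * Real.sinh y * (Real.cosh y)⁻¹ ^ 5) y := by
  have h := ((Real.hasDerivAt_cosh y).inv (coshne y)).pow 4
  refine HasDerivAt.congr_deriv h (Eq.symm ?_)
  have hc := coshne y
  simp only [Pi.pow_apply, Pi.inv_apply, Nat.cast_ofNat, Nat.reduceSub, one_div]
  field_simp

private lemma hg2 (y : ℝ) : HasDerivAt (fun z => -4 * Real.sinh z * (Real.cosh z)⁻¹ ^ 5)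
    (16 * (Real.cosh y)⁻¹ ^ 4 - 20 * (Real.cosh y)⁻¹ ^ 6) y := by
  have h := ((Real.hasDerivAt_sinh y).const_mul (-4 : ℝ)).mul
    (((Real.hasDerivAt_cosh y).inv (coshne y)).pow 5)
  refine HasDerivAt.congr_deriv h (Eq.symm ?_)
  have hs := Real.sinh_sq y
  simp only [Pi.pow_apply, Pi.inv_apply, Nat.cast_ofNat, Nat.reduceSub, one_div]
  field_simp
  linear_combination (-20) * hs

private lemma deriv_affine (F F' : ℝ → ℝ) (hF : ∀ y, HasDerivAt F (F' y) y) (k b c : ℝ) :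
    (deriv fun x => c * F (k * x + b)) = fun x => c * k * F' (k * x + b) := by
  funext x
  have haff : HasDerivAt (fun x : ℝ => k * x + b) k x := by
    simpa using ((hasDerivAt_id x).const_mul k).add_const b
  have h := ((hF (k * x + b)).comp x haff).const_mul c
  exact h.deriv.trans (by ring)

private lemma iter2_affine (c k b x : ℝ) :
    iteratedDeriv 2 (fun y => c * (Real.cosh (k * y + b))⁻¹ ^ 2) x
      = c * k * k * (4 * (Real.cosh (k * x + b))⁻¹ ^ 2 - 6 * (Real.cosh (k * x + b))⁻¹ ^ 4) := by
  have h1 : (deriv fun y => c * (Real.cosh (k * y + b))⁻¹ ^ 2)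
      = fun y => c * k * (-2 * Real.sinh (k * y + b) * (Real.cosh (k * y + b))⁻¹ ^ 3) :=
    deriv_affine _ _ hd1 k b c
  have h2 : (deriv fun y => c * k * (-2 * Real.sinh (k * y + b) * (Real.cosh (k * y + b))⁻¹ ^ 3))
      = fun y => c * k * k * (4 * (Real.cosh (k * y + b))⁻¹ ^ 2 - 6 * (Real.cosh (k * y + b))⁻¹ ^ 4) :=
    deriv_affine _ _ hd2 k b (c * k)
  rw [iteratedDeriv_succ, iteratedDeriv_one, h1, h2]

private lemma iter4_affine (c k b x : ℝ) :
    iteratedDeriv 4 (fun y => c * (Real.cosh (k * y + b))⁻¹ ^ 2) x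
      = c * k * k * k * k * (16 * (Real.cosh (k * x + b))⁻¹ ^ 2
          - 120 * (Real.cosh (k * x + b))⁻¹ ^ 4 + 120 * (Real.cosh (k * x + b))⁻¹ ^ 6) := by
  have h1 : (deriv fun y => c * (Real.cosh (k * y + b))⁻¹ ^ 2)
      = fun y => c * k * (-2 * Real.sinh (k * y + b) * (Real.cosh (k * y + b))⁻¹ ^ 3) :=
    deriv_affine _ _ hd1 k b c
  have h2 : (deriv fun y => c * k * (-2 * Real.sinh (k * y + b) * (Real.cosh (k * y + b))⁻¹ ^ 3))
      = fun y => c * k * k * (4 * (Real.cosh (k * y + b))⁻¹ ^ 2 - 6 * (Real.cosh (k * y + b))⁻¹ ^ 4) :=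
    deriv_affine _ _ hd2 k b (c * k)
  have h3 : (deriv fun y => c * k * k * (4 * (Real.cosh (k * y + b))⁻¹ ^ 2
        - 6 * (Real.cosh (k * y + b))⁻¹ ^ 4))
      = fun y => c * k * k * k * (-8 * Real.sinh (k * y + b) * (Real.cosh (k * y + b))⁻¹ ^ 3
          + 24 * Real.sinh (k * y + b) * (Real.cosh (k * y + b))⁻¹ ^ 5) :=
    deriv_affine _ _ hd3 k b (c * k * k)
  have h4 : (deriv fun y => c * k * k * k * (-8 * Real.sinh (k * y + b) * (Real.cosh (k * y + b))⁻¹ ^ 3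
        + 24 * Real.sinh (k * y + b) * (Real.cosh (k * y + b))⁻¹ ^ 5))
      = fun y => c * k * k * k * k * (16 * (Real.cosh (k * y + b))⁻¹ ^ 2
          - 120 * (Real.cosh (k * y + b))⁻¹ ^ 4 + 120 * (Real.cosh (k * y + b))⁻¹ ^ 6) :=
    deriv_affine _ _ hd4 k b (c * k * k * k)
  rw [show (4 : ℕ) = 3 + 1 from rfl, iteratedDeriv_succ,
    show (3 : ℕ) = 2 + 1 from rfl, iteratedDeriv_succ,
    iteratedDeriv_succ, iteratedDeriv_one, h1, h2, h3, h4]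

private lemma iter2g_affine (c k b x : ℝ) :
    iteratedDeriv 2 (fun y => c * (Real.cosh (k * y + b))⁻¹ ^ 4) x
      = c * k * k * (16 * (Real.cosh (k * x + b))⁻¹ ^ 4 - 20 * (Real.cosh (k * x + b))⁻¹ ^ 6) := by
  have h1 : (deriv fun y => c * (Real.cosh (k * y + b))⁻¹ ^ 4)
      = fun y => c * k * (-4 * Real.sinh (k * y + b) * (Real.cosh (k * y + b))⁻¹ ^ 5) :=
    deriv_affine _ _ hg1 k b c
  have h2 : (deriv fun y => c * k * (-4 * Real.sinh (k * y + b) * (Real.cosh (k * y + b))⁻¹ ^ 5))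
      = fun y => c * k * k * (16 * (Real.cosh (k * y + b))⁻¹ ^ 4 - 20 * (Real.cosh (k * y + b))⁻¹ ^ 6) :=
    deriv_affine _ _ hg2 k b (c * k)
  rw [iteratedDeriv_succ, iteratedDeriv_one, h1, h2]

private lemma hpq_aux (β lam : ℝ) (hβ : 0 < β) (p q : ℝ)
    (hp : p = -Real.sqrt β * (1 + 6 * lam - 3 * lam ^ 2) / (1 + 3 * lam ^ 2))
    (hq : q = -Real.sqrt β * (1 - 6 * lam - 3 * lam ^ 2) / (1 + 3 * lam ^ 2)) :
    p ^ 2 + p * q + q ^ 2 = 3 * β := by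
  have hs : Real.sqrt β ^ 2 = β := Real.sq_sqrt hβ.le
  have hden : (1 : ℝ) + 3 * lam ^ 2 ≠ 0 := by positivity
  rw [hp, hq]
  field_simp
  linear_combination (3 * (1 + 3 * lam ^ 2) ^ 2) * hs

/-- The 1-soliton in sech² form solves the scalar "good" Boussinesq equation. -/
theorem one_soliton_solves_boussinesq (β lam : ℝ) (hβ : 0 < β) (hlam : lam ≠ 0)
    (p q φ₀ : ℝ)
    (hp : p = -Real.sqrt β * (1 + 6 * lam - 3 * lam ^ 2) / (1 + 3 * lam ^ 2))
    (hq : q = -Real.sqrt β * (1 - 6 * lam - 3 * lam ^ 2) / (1 + 3 * lam ^ 2))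
    (u : ℝ → ℝ → ℝ)
    (hu : ∀ x t, u x t = (1/2) * (p - q) ^ 2 *
      (1 / Real.cosh ((1/2) * (p - q) * (x + (p + q) * t) + φ₀)) ^ 2) :
    ∀ x t,
      iteratedDeriv 2 (fun t' => u x t') t
        - 4 * β * iteratedDeriv 2 (fun x' => u x' t) x
        + (1/3) * iteratedDeriv 4 (fun x' => u x' t) x
        + iteratedDeriv 2 (fun x' => (u x' t) ^ 2) x = 0 := by
  intro x t
  have hpq := hpq_aux β lam hβ p q hp hq
  have e1 : (fun t' => u x t') = fun t' => ((1/2) * (p - q) ^ 2) *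
      (Real.cosh (((1/2) * (p - q) * (p + q)) * t' + ((1/2) * (p - q) * x + φ₀)))⁻¹ ^ 2 := by
    funext t'
    rw [hu, show (1/2) * (p - q) * (x + (p + q) * t') + φ₀
      = ((1/2) * (p - q) * (p + q)) * t' + ((1/2) * (p - q) * x + φ₀) from by ring]
    simp only [one_div]
  have e2 : (fun x' => u x' t) = fun x' => ((1/2) * (p - q) ^ 2) *
      (Real.cosh (((1/2) * (p - q)) * x' + ((1/2) * (p - q) * (p + q) * t + φ₀)))⁻¹ ^ 2 := by
    funext x'
    rw [hu, show (1/2) * (p - q) * (x' + (p + q) * t) + φ₀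
      = ((1/2) * (p - q)) * x' + ((1/2) * (p - q) * (p + q) * t + φ₀) from by ring]
    simp only [one_div]
  have e3 : (fun x' => (u x' t) ^ 2) = fun x' => (((1/2) * (p - q) ^ 2) ^ 2) *
      (Real.cosh (((1/2) * (p - q)) * x' + ((1/2) * (p - q) * (p + q) * t + φ₀)))⁻¹ ^ 4 := by
    funext x'
    rw [hu, show (1/2) * (p - q) * (x' + (p + q) * t) + φ₀
      = ((1/2) * (p - q)) * x' + ((1/2) * (p - q) * (p + q) * t + φ₀) from by ring]
    ring
  rw [e1, e2, e3, iter2_affine, iter2_affine, iter4_affine, iter2g_affine,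
    show ((1/2) * (p - q) * (p + q)) * t + ((1/2) * (p - q) * x + φ₀)
      = ((1/2) * (p - q)) * x + ((1/2) * (p - q) * (p + q) * t + φ₀) from by ring,
    show (4 : ℝ) * β = (4/3) * (p ^ 2 + p * q + q ^ 2) from by linarith]
  ring
end

section
/- The linear R-matrix R(λᵢ,λⱼ) of the vector Boussinesq equation, given by R₁₁ = (λᵢ-λⱼ)(1-λᵢ-λⱼ-3λᵢλⱼ)/D, R₁₂ = 2λᵢ(1+3λⱼ²)/D, R₂₁ = 2λⱼ(1+3λᵢ²)/D, R₂₂ = (λⱼ-λᵢ)(1+λᵢ+λⱼ-3λᵢλⱼ)/D where D = (λᵢ+λⱼ)(1-λᵢ+λⱼ+3λᵢλⱼ), satisfies the parametrized Yang–Baxter-type equation: acting on (ℝ²)⊗³ via the standard embeddings R₁₂, R₁₃, R₂₃ (with spectral parameters (λ₁,λ₂), (λ₁,λ₃), (λ₂,λ₃) respectively), one has R₁₂(λ₁,λ₂) R₁₃(λ₁,λ₃) R₂₃(λ₂,λ₃) = R₂₃(λ₂,λ₃) R₁₃(λ₁,λ₃) R₁₂(λ₁,λ₂), for generic λ₁,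 λ₂, λ₃ such that all denominators are nonzero. -/
/-- The R-matrix of the vector Boussinesq equation. -/
noncomputable def BsqR (li lj : ℝ) : Matrix (Fin 2) (Fin 2) ℝ :=
  let D := (li + lj) * (1 - li + lj + 3 * li * lj)
  !![(li - lj) * (1 - li - lj - 3 * li * lj) / D, 2 * li * (1 + 3 * lj ^ 2) / D;
     2 * lj * (1 + 3 * li ^ 2) / D, (lj - li) * (1 + li + lj - 3 * li * lj) / D]

/-- Embedding of a 2×2 matrix acting on the tensor factors `a` and `b` (with `a ≠ b`)
of `(ℝ²)^{⊗3} ≅ ℝ²⊗ℝ²⊗ℝ²`, realized on the three ℝ²-slots indexed by `Fin 3`,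
acting as the identity on the remaining slot. -/
def embedR (a b : Fin 3) (M : Matrix (Fin 2) (Fin 2) ℝ) :
    Matrix (Fin 3 × Fin 2) (Fin 3 × Fin 2) ℝ :=
  Matrix.of fun r c =>
    (if r.2 = c.2 then (1 : ℝ) else 0) *
      (if r.1 = a ∧ c.1 = a then M 0 0
       else if r.1 = a ∧ c.1 = b then M 0 1
       else if r.1 = b ∧ c.1 = a then M 1 0
       else if r.1 = b ∧ c.1 = b then M 1 1
       else if r.1 = c.1 then 1 else 0)

/-- 3×3 padding of a 2×2 matrix into slots a, b. -/
def padM (a b : Fin 3) (M : Matrix (Fin 2) (Fin 2) ℝ) : Matrix (Fin 3) (Fin 3) ℝ :=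
  Matrix.of fun i j =>
    if i = a ∧ j = a then M 0 0
    else if i = a ∧ j = b then M 0 1
    else if i = b ∧ j = a then M 1 0
    else if i = b ∧ j = b then M 1 1
    else if i = j then 1 else 0

/-- tensor with identity on the Fin 2 slot -/
def tid (N : Matrix (Fin 3) (Fin 3) ℝ) : Matrix (Fin 3 × Fin 2) (Fin 3 × Fin 2) ℝ :=
  Matrix.of fun r c => if r.2 = c.2 then N r.1 c.1 else 0

lemma embedR_eq (a b : Fin 3) (M : Matrix (Fin 2) (Fin 2) ℝ) :
    embedR a b M = tid (padM a b M) := by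
  ext r c
  simp only [embedR, tid, padM, Matrix.of_apply, ite_mul, one_mul, zero_mul]

lemma tid_mul (N N' : Matrix (Fin 3) (Fin 3) ℝ) : tid N * tid N' = tid (N * N') := by
  ext r c
  simp only [tid, Matrix.mul_apply, Fintype.sum_prod_type, Matrix.of_apply,
    ite_mul, zero_mul, mul_ite, mul_zero]
  by_cases h : r.2 = c.2 <;> simp [h, Finset.sum_ite_eq]

lemma pad01 (M : Matrix (Fin 2) (Fin 2) ℝ) :
    padM 0 1 M = !![M 0 0, M 0 1, 0; M 1 0, M 1 1, 0; 0, 0, 1] := by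
  ext i j; fin_cases i <;> fin_cases j <;>
    simp [padM, Matrix.vecHead, Matrix.vecTail]

lemma pad02 (M : Matrix (Fin 2) (Fin 2) ℝ) :
    padM 0 2 M = !![M 0 0, 0, M 0 1; 0, 1, 0; M 1 0, 0, M 1 1] := by
  ext i j; fin_cases i <;> fin_cases j <;>
    simp [padM, Matrix.vecHead, Matrix.vecTail]

lemma pad12 (M : Matrix (Fin 2) (Fin 2) ℝ) :
    padM 1 2 M = !![1, 0, 0; 0, M 0 0, M 0 1; 0, M 1 0, M 1 1] := by
  ext i j; fin_cases i <;> fin_cases j <;>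
    simp [padM, Matrix.vecHead, Matrix.vecTail]

variable {x y z a b c d e p q r s t : ℝ}

lemma S1 (hx : x ≠ 0) (hy : y ≠ 0) (hz : z ≠ 0)
    (H : a * b * y + c * d * e = p * q * z) :
    a/x*(b/z) + c/x*(d/y)*(e/z) = p/y*(q/x) := by
  field_simp
  linear_combination H

lemma S2 (hx : x ≠ 0) (hy : y ≠ 0) (hz : z ≠ 0)
    (H : a * b * y + c * d * e = p * x * z) :
    a/x*(b/z) + c/x*(d/y)*(e/z) = p/y := by
  field_simp
  linear_combination H

lemma S3 (hx : x ≠ 0) (hy : y ≠ 0) (hz : z ≠ 0)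
    (H : a * b * z = p * q * r + s * t * y) :
    a/x*(b/y) = p/z*(q/y)*(r/x) + s/z*(t/x) := by
  field_simp
  linear_combination H

lemma S4 (hx : x ≠ 0) (hy : y ≠ 0) (hz : z ≠ 0)
    (H : a * b * y + c * d * e = p * q * r + s * t * y) :
    a/x*(b/z) + c/x*(d/y)*(e/z) = p/z*(q/y)*(r/x) + s/z*(t/x) := by
  field_simp
  linear_combination H

lemma S5 (hx : x ≠ 0) (hy : y ≠ 0) (hz : z ≠ 0)
    (H : a * b * y + c * d * e = p * q * x) :
    a/x*(b/z) + c/x*(d/y)*(e/z) = p/z*(q/y) := by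
  field_simp
  linear_combination H

lemma S6 (hx : x ≠ 0) (hy : y ≠ 0) (hz : z ≠ 0)
    (H : a * x * z = p * q * r + s * t * y) :
    a/y = p/z*(q/y)*(r/x) + s/z*(t/x) := by
  field_simp
  linear_combination H

lemma S7 (hx : x ≠ 0) (hy : y ≠ 0) (hz : z ≠ 0)
    (H : a * b * x = p * q * r + s * t * y) :
    a/y*(b/z) = p/z*(q/y)*(r/x) + s/z*(t/x) := by
  field_simp
  linear_combination H

/-- Abstract form of the 3×3 Yang–Baxter identity given the 7 nontrivial
scalar relations. -/
lemma yb_abstract (a₁ b₁ c₁ d₁ a₂ b₂ c₂ d₂ a₃ b₃ c₃ d₃ : ℝ)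
    (e01 : b₁ * a₃ + a₁ * b₂ * c₃ = a₂ * b₁)
    (e02 : b₁ * b₃ + a₁ * b₂ * d₃ = b₂)
    (e10 : c₁ * a₂ = b₃ * c₂ * a₁ + a₃ * c₁)
    (e11 : d₁ * a₃ + c₁ * b₂ * c₃ = b₃ * c₂ * b₁ + a₃ * d₁)
    (e12 : d₁ * b₃ + c₁ * b₂ * d₃ = b₃ * d₂)
    (e20 : c₂ = d₃ * c₂ * a₁ + c₃ * c₁)
    (e21 : d₂ * c₃ = d₃ * c₂ * b₁ + c₃ * d₁) :
    (!![a₁, b₁, 0; c₁, d₁, 0; 0, 0, 1] * !![a₂, 0, b₂; 0, 1, 0; c₂, 0, d₂] *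
        !![1, 0, 0; 0, a₃, b₃; 0, c₃, d₃] : Matrix (Fin 3) (Fin 3) ℝ) =
      !![1, 0, 0; 0, a₃, b₃; 0, c₃, d₃] * !![a₂, 0, b₂; 0, 1, 0; c₂, 0, d₂] *
        !![a₁, b₁, 0; c₁, d₁, 0; 0, 0, 1] := by
  rw [Matrix.mul_fin_three, Matrix.mul_fin_three, Matrix.mul_fin_three, Matrix.mul_fin_three]
  ext i j
  fin_cases i <;> fin_cases j <;>
    simp [Matrix.vecHead, Matrix.vecTail] <;> linarith [e01, e02, e10, e11, e12, e20, e21]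

set_option maxHeartbeats 2000000 in
/-- The parametrized Yang–Baxter equation for the linear R-matrix of the
vector Boussinesq equation. -/
theorem BsqR_yang_baxter (l₁ l₂ l₃ : ℝ)
    (h12 : (l₁ + l₂) * (1 - l₁ + l₂ + 3 * l₁ * l₂) ≠ 0)
    (h13 : (l₁ + l₃) * (1 - l₁ + l₃ + 3 * l₁ * l₃) ≠ 0)
    (h23 : (l₂ + l₃) * (1 - l₂ + l₃ + 3 * l₂ * l₃) ≠ 0) :
    embedR 0 1 (BsqR l₁ l₂) * embedR 0 2 (BsqR l₁ l₃) * embedR 1 2 (BsqR l₂ l₃) =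
      embedR 1 2 (BsqR l₂ l₃) * embedR 0 2 (BsqR l₁ l₃) * embedR 0 1 (BsqR l₁ l₂) := by
  rw [embedR_eq, embedR_eq, embedR_eq, tid_mul, tid_mul, tid_mul, tid_mul]
  rw [pad01, pad02, pad12]
  refine congrArg tid ?_
  apply yb_abstract <;>
    simp only [BsqR, Matrix.of_apply, Matrix.cons_val', Matrix.cons_val_zero,
      Matrix.cons_val_one, Matrix.head_cons, Matrix.empty_val', Matrix.cons_val_fin_one,
      Matrix.head_fin_const]
  · exact S1 h12 h13 h23 (by ring)
  · exact S2 h12 h13 h23 (by ring)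
  · exact S3 h12 h13 h23 (by ring)
  · exact S4 h12 h13 h23 (by ring)
  · exact S5 h12 h13 h23 (by ring)
  · exact S6 h12 h13 h23 (by ring)
  · exact S7 h12 h13 h23 (by ring)
end

section
/- Let β > 0 and suppose p and q satisfy p² + pq + q² = 3β. Then the function φ(x,t) = (p-q)·e^{A}/(e^{A}+e^{B}), with A = px + p²t + φ₀ and B = qx + q²t - φ₀ for any constant φ₀, satisfies the scalar potential Boussinesq equation φ_tt - 4βφ_xx + (1/3)φ_xxxx + 2(φ_x²)_x = 0. -/
noncomputable def S0 (u : ℝ) : ℝ := Real.exp u / (Real.exp u + 1)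
noncomputable def S1_s18 (u : ℝ) : ℝ := Real.exp u / (Real.exp u + 1) ^ 2
noncomputable def S2_s18 (u : ℝ) : ℝ := (Real.exp u - (Real.exp u) ^ 2) / (Real.exp u + 1) ^ 3
noncomputable def S3_s18 (u : ℝ) : ℝ :=
  (Real.exp u - 4 * (Real.exp u) ^ 2 + (Real.exp u) ^ 3) / (Real.exp u + 1) ^ 4
noncomputable def S4_s18 (u : ℝ) : ℝ :=
  (Real.exp u - 11 * (Real.exp u) ^ 2 + 11 * (Real.exp u) ^ 3 - (Real.exp u) ^ 4)
    / (Real.exp u + 1) ^ 5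

lemma exp_add_one_ne (u : ℝ) : Real.exp u + 1 ≠ 0 := by positivity

lemma hS0 (u : ℝ) : HasDerivAt S0 (S1_s18 u) u := by
  have he := Real.hasDerivAt_exp u
  have h := he.div (he.add_const 1) (exp_add_one_ne u)
  refine h.congr_deriv ?_
  unfold S1_s18
  field_simp
  ring

lemma hS1 (u : ℝ) : HasDerivAt S1_s18 (S2_s18 u) u := by
  have he := Real.hasDerivAt_exp u
  have hd : (Real.exp u + 1) ^ 2 ≠ 0 := by positivity
  have h := he.div ((he.add_const 1).pow 2) hd
  refine h.congr_deriv ?_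
  unfold S2_s18
  simp only [Pi.pow_apply]
  field_simp
  ring

lemma hS2 (u : ℝ) : HasDerivAt S2_s18 (S3_s18 u) u := by
  have he := Real.hasDerivAt_exp u
  have hd : (Real.exp u + 1) ^ 3 ≠ 0 := by positivity
  have hnum : HasDerivAt (fun v => Real.exp v - (Real.exp v) ^ 2)
      (Real.exp u - 2 * (Real.exp u) ^ 1 * Real.exp u) u := he.sub (he.pow 2)
  have h := hnum.div ((he.add_const 1).pow 3) hd
  refine h.congr_deriv ?_
  unfold S3_s18
  simp only [Pi.pow_apply]
  field_simp
  ring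

lemma hS3 (u : ℝ) : HasDerivAt S3_s18 (S4_s18 u) u := by
  have he := Real.hasDerivAt_exp u
  have hd : (Real.exp u + 1) ^ 4 ≠ 0 := by positivity
  have hnum : HasDerivAt (fun v => Real.exp v - 4 * (Real.exp v) ^ 2 + (Real.exp v) ^ 3)
      (Real.exp u - 4 * (2 * (Real.exp u) ^ 1 * Real.exp u)
        + 3 * (Real.exp u) ^ 2 * Real.exp u) u :=
    ((he.sub ((he.pow 2).const_mul 4)).add (he.pow 3))
  have h := hnum.div ((he.add_const 1).pow 4) hd
  refine h.congr_deriv ?_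
  unfold S4_s18
  simp only [Pi.pow_apply]
  field_simp
  ring

lemma hasDerivAt_affine (a b x : ℝ) : HasDerivAt (fun y : ℝ => a * y + b) a x := by
  simpa using ((hasDerivAt_id x).const_mul a).add_const b

lemma comp_affine {f f' : ℝ → ℝ} (hf : ∀ u, HasDerivAt f (f' u) u) (C a b x : ℝ) :
    HasDerivAt (fun y => C * f (a * y + b)) ((C * a) * f' (a * x + b)) x := by
  have h := ((hf (a * x + b)).comp x (hasDerivAt_affine a b x)).const_mul C
  refine h.congr_deriv ?_
  ring

lemma deriv_comp_affine {f f' : ℝ → ℝ} (hf : ∀ u, HasDerivAt f (f' u) u) (C a b : ℝ) :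
    deriv (fun y => C * f (a * y + b)) = fun y => (C * a) * f' (a * y + b) :=
  funext fun x => (comp_affine hf C a b x).deriv

/-- The 1-soliton in kink form solves the scalar potential Boussinesq equation. -/
theorem potential_boussinesq_one_soliton (β p q φ₀ : ℝ) (hβ : 0 < β)
    (hroots : p ^ 2 + p * q + q ^ 2 = 3 * β)
    (φ : ℝ → ℝ → ℝ)
    (hφ : ∀ x t, φ x t = (p - q) * Real.exp (p * x + p ^ 2 * t + φ₀) /
      (Real.exp (p * x + p ^ 2 * t + φ₀) + Real.exp (q * x + q ^ 2 * t - φ₀))) :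
    ∀ x t,
      iteratedDeriv 2 (fun t' => φ x t') t
        - 4 * β * iteratedDeriv 2 (fun x' => φ x' t) x
        + (1/3) * iteratedDeriv 4 (fun x' => φ x' t) x
        + 2 * deriv (fun x' => (deriv (fun x'' => φ x'' t) x') ^ 2) x = 0 := by
  intro x t
  set a : ℝ := p - q with ha
  set w : ℝ := p ^ 2 - q ^ 2 with hw
  have hφ' : ∀ x' t', φ x' t' = a * S0 (a * x' + (w * t' + 2 * φ₀)) := by
    intro x' t'
    rw [hφ]
    unfold S0
    rw [show a * x' + (w * t' + 2 * φ₀)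
        = (p * x' + p ^ 2 * t' + φ₀) - (q * x' + q ^ 2 * t' - φ₀) by rw [ha, hw]; ring]
    rw [Real.exp_sub (p * x' + p ^ 2 * t' + φ₀) (q * x' + q ^ 2 * t' - φ₀)]
    have h1 : Real.exp (p * x' + p ^ 2 * t' + φ₀) > 0 := Real.exp_pos _
    have h2 : Real.exp (q * x' + q ^ 2 * t' - φ₀) > 0 := Real.exp_pos _
    rw [mul_div_assoc]
    congr 1
    rw [div_eq_div_iff (by positivity) (by positivity)]
    field_simp
  set d : ℝ := w * t + 2 * φ₀ with hd
  set u : ℝ := a * x + d with hu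
  -- spatial derivatives
  have hx0 : (fun x' => φ x' t) = fun x' => a * S0 (a * x' + d) := funext fun x' => hφ' x' t
  have hx1 : deriv (fun x' => φ x' t) = fun x' => (a * a) * S1_s18 (a * x' + d) := by
    rw [hx0]; exact deriv_comp_affine hS0 a a d
  have hx2 : deriv (fun x' => (a * a) * S1_s18 (a * x' + d))
      = fun x' => ((a * a) * a) * S2_s18 (a * x' + d) := deriv_comp_affine hS1 (a * a) a d
  have hx3 : deriv (fun x' => ((a * a) * a) * S2_s18 (a * x' + d))
      = fun x' => (((a * a) * a) * a) * S3_s18 (a * x' + d) := deriv_comp_affine hS2 (a * a * a) a d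
  have hx4 : deriv (fun x' => (((a * a) * a) * a) * S3_s18 (a * x' + d))
      = fun x' => ((((a * a) * a) * a) * a) * S4_s18 (a * x' + d) :=
    deriv_comp_affine hS3 (a * a * a * a) a d
  have hIx2 : iteratedDeriv 2 (fun x' => φ x' t) x = a ^ 3 * S2_s18 u := by
    rw [show (2 : ℕ) = 1 + 1 from rfl, iteratedDeriv_succ, iteratedDeriv_one, hx1, hx2]
    rw [hu]; ring
  have hIx4 : iteratedDeriv 4 (fun x' => φ x' t) x = a ^ 5 * S4_s18 u := by
    rw [show (4 : ℕ) = 3 + 1 from rfl, iteratedDeriv_succ,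
        show (3 : ℕ) = 2 + 1 from rfl, iteratedDeriv_succ,
        show (2 : ℕ) = 1 + 1 from rfl, iteratedDeriv_succ, iteratedDeriv_one,
        hx1, hx2, hx3, hx4]
    rw [hu]; ring
  -- time derivatives
  have ht0 : (fun t' => φ x t') = fun t' => a * S0 (w * t' + (a * x + 2 * φ₀)) := by
    funext t'
    rw [hφ' x t']
    congr 1
    ring
  have hIt2 : iteratedDeriv 2 (fun t' => φ x t') t = a * w ^ 2 * S2_s18 u := by
    rw [show (2 : ℕ) = 1 + 1 from rfl, iteratedDeriv_succ, iteratedDeriv_one, ht0,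
        deriv_comp_affine hS0 a w (a * x + 2 * φ₀),
        deriv_comp_affine hS1 (a * w) w (a * x + 2 * φ₀)]
    have harg : w * t + (a * x + 2 * φ₀) = u := by rw [hu, hd]; ring
    simp only [harg]
    ring
  -- nonlinear term
  have hnl : deriv (fun x' => (deriv (fun x'' => φ x'' t) x') ^ 2) x
      = 2 * (a * a * S1_s18 u) * (a * a * a * S2_s18 u) := by
    rw [hx1]
    have h := ((comp_affine hS1 (a * a) a d x).pow 2).deriv
    rw [show (fun x' => (fun x' => a * a * S1_s18 (a * x' + d)) x' ^ 2)
        = (fun y => a * a * S1_s18 (a * y + d)) ^ 2 from rfl, h, hu]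
    norm_num
  rw [hIt2, hIx2, hIx4, hnl]
  have hβ' : β = (p ^ 2 + p * q + q ^ 2) / 3 := by linarith
  have hE := exp_add_one_ne u
  have hE0 := Real.exp_ne_zero u
  unfold S1_s18 S2_s18 S4_s18
  rw [hβ', ha, hw]
  field_simp
  ring
end

section
/- Let N ∈ ℕ, and let Ω: ℝ² → GL_N(ℝ) be differentiable with Ω_x = -χKθ for differentiable matrix functions χ (N×n), θ (m×N) and a constant n×m matrix K. Then for φ = φ₀ - θΩ⁻¹χ (with φ₀ an m×n matrix function), one has tr(Kφ) = tr(Kφ₀) + (log det Ω)_x at every point where det Ω > 0. -/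
open Matrix Finset

/-- Jacobi's formula. -/
lemma jacobi_hasDerivAt {N : ℕ} (M : ℝ → Matrix (Fin N) (Fin N) ℝ)
    (M' : Matrix (Fin N) (Fin N) ℝ) (x : ℝ)
    (h : ∀ i j, HasDerivAt (fun y => M y i j) (M' i j) x) :
    HasDerivAt (fun y => (M y).det) ((adjugate (M x) * M').trace) x := by
  have hd : HasDerivAt (fun y => (M y).det)
      (∑ σ : Equiv.Perm (Fin N), (Equiv.Perm.sign σ : ℝ) *
        ∑ i, (∏ j ∈ univ.erase i, M x (σ j) j) * M' (σ i) i) x := by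
    have : ∀ y, (M y).det = ∑ σ : Equiv.Perm (Fin N),
        (Equiv.Perm.sign σ : ℝ) * ∏ i, M y (σ i) i := fun y => Matrix.det_apply' _
    rw [funext this]
    apply HasDerivAt.fun_sum
    intro σ _
    have := HasDerivAt.fun_finsetProd (u := univ)
      (f := fun i y => M y (σ i) i) (f' := fun i => M' (σ i) i) (x := x)
      (fun i _ => h (σ i) i)
    simpa [smul_eq_mul] using this.const_mul ((Equiv.Perm.sign σ : ℝ))
  convert hd using 1
  -- combinatorial identity
  have key : ∀ i : Fin N, (updateCol (M x) i (fun k => M' k i)).det =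
      ∑ σ : Equiv.Perm (Fin N), (Equiv.Perm.sign σ : ℝ) *
        ((∏ j ∈ univ.erase i, M x (σ j) j) * M' (σ i) i) := by
    intro i
    rw [Matrix.det_apply']
    refine Finset.sum_congr rfl fun σ _ => ?_
    rw [← Finset.mul_prod_erase univ _ (mem_univ i)]
    rw [Finset.prod_congr rfl (fun j hj => ?_), updateCol_self]
    · ring
    · rw [updateCol_apply, if_neg (Finset.ne_of_mem_erase hj)]
  have tr : (adjugate (M x) * M').trace =
      ∑ i, (updateCol (M x) i (fun k => M' k i)).det := by
    simp only [← Matrix.cramer_apply, Matrix.cramer_eq_adjugate_mulVec]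
    simp [Matrix.trace, Matrix.diag, Matrix.mul_apply, Matrix.mulVec, dotProduct]
  rw [tr]
  simp_rw [key]
  rw [Finset.sum_comm]
  exact Finset.sum_congr rfl fun σ _ => (Finset.mul_sum _ _ _).symm

/-- The τ-function relation: for `φ = φ₀ - θ Ω⁻¹ χ` with `Ω_x = -χKθ`,
`tr(Kφ) = tr(Kφ₀) + (log det Ω)_x` wherever `det Ω > 0`. -/
theorem trace_log_det_relation (N n m : ℕ)
    (K : Matrix (Fin n) (Fin m) ℝ)
    (θ : ℝ → Matrix (Fin m) (Fin N) ℝ)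
    (χ : ℝ → Matrix (Fin N) (Fin n) ℝ)
    (φ₀ : ℝ → Matrix (Fin m) (Fin n) ℝ)
    (Ω : ℝ → Matrix (Fin N) (Fin N) ℝ)
    (hΩdiff : ∀ i j, Differentiable ℝ (fun x => Ω x i j))
    (hΩx : ∀ x (i j : Fin N), deriv (fun y => Ω y i j) x = (-(χ x * K * θ x)) i j)
    (φ : ℝ → Matrix (Fin m) (Fin n) ℝ)
    (hφ : ∀ x, φ x = φ₀ x - θ x * (Ω x)⁻¹ * χ x) :
    ∀ x, 0 < (Ω x).det →
      (K * φ x).trace = (K * φ₀ x).trace +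
        deriv (fun y => Real.log ((Ω y).det)) x := by
  intro x hdet
  have hM : ∀ i j, HasDerivAt (fun y => Ω y i j) ((-(χ x * K * θ x)) i j) x := by
    intro i j
    have := ((hΩdiff i j) x).hasDerivAt
    rwa [hΩx x i j] at this
  have hdetD := jacobi_hasDerivAt Ω (-(χ x * K * θ x)) x hM
  have hlog := (hdetD.log (ne_of_gt hdet))
  rw [hlog.deriv]
  have hinv : (Ω x)⁻¹ = (Ω x).det⁻¹ • adjugate (Ω x) := by
    rw [Matrix.inv_def, Ring.inverse_eq_inv]
  have hrw : (adjugate (Ω x) * -(χ x * K * θ x)).trace / (Ω x).det =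
      ((Ω x)⁻¹ * -(χ x * K * θ x)).trace := by
    rw [hinv, Matrix.smul_mul, Matrix.trace_smul]
    simp [div_eq_inv_mul, smul_eq_mul]
  rw [hrw, hφ]
  have cyc : ((Ω x)⁻¹ * -(χ x * K * θ x)).trace
      = -(K * (θ x * (Ω x)⁻¹ * χ x)).trace := by
    rw [Matrix.mul_neg, Matrix.trace_neg, neg_inj]
    rw [show (Ω x)⁻¹ * (χ x * K * θ x) = (Ω x)⁻¹ * χ x * (K * θ x) by
      simp [Matrix.mul_assoc]]
    rw [Matrix.trace_mul_comm, show K * θ x * ((Ω x)⁻¹ * χ x) = K * (θ x * (Ω x)⁻¹ * χ x) by simp [Matrix.mul_assoc]]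
  rw [cyc, Matrix.mul_sub, Matrix.trace_sub]
  ring
end
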